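/- arXiv:0709.3715 — 2 statements merged into one kernel-verified Lean document; each statement's English description precedes it below -/
import Mathlib

section
/- Let h : g₁ ∼ g₂ be a homotopy through monotone maps between monotone continuous maps g₁, g₂ : X → Y, where X is a compact Hausdorff preordered topological space and Y is a complete lattice carrying a Lawson-lattice topology. Then the functions j, k : X × [0,1] → Y defined by j(x,t) = ⨅ { h(x,s) | s ∈ [0, 1−t] } and k(x,t) = ⨅ { h(x,s) | s ∈ [t, 1] } are continuous, and are monotone with respect to the product order (the preorder on X and the standard order on [0,1]); moreover j(·,0) = k(·,0), j(·,1) = g₁, and k(·,1) = g₂. -/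
open Filter Topology Set unitInterval


set_option linter.unusedSectionVars false
set_option maxHeartbeats 1000000

section Helpers
variable {Y : Type*} [CompleteLattice Y] [TopologicalSpace Y] [CompactSpace Y] [T2Space Y]

theorem myIsClosed_le (hinf : Continuous fun p : Y × Y => p.1 ⊓ p.2) :
    IsClosed {p : Y × Y | p.1 ≤ p.2} := by
  have : {p : Y × Y | p.1 ≤ p.2} = {p : Y × Y | p.1 ⊓ p.2 = p.1} := by
    ext p; simp [inf_eq_left]
  rw [this]
  exact isClosed_eq hinf continuous_fst

theorem myIsClosed_le_const (hinf : Continuous fun p : Y × Y => p.1 ⊓ p.2) (c : Y) :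
    IsClosed {z : Y | z ≤ c} := by
  have : {z : Y | z ≤ c} = (fun z : Y => (z, c)) ⁻¹' {p : Y × Y | p.1 ≤ p.2} := rfl
  rw [this]
  exact (myIsClosed_le hinf).preimage (continuous_id.prodMk continuous_const)

theorem myIsClosed_const_le (hinf : Continuous fun p : Y × Y => p.1 ⊓ p.2) (c : Y) :
    IsClosed {z : Y | c ≤ z} := by
  have : {z : Y | c ≤ z} = (fun z : Y => (c, z)) ⁻¹' {p : Y × Y | p.1 ≤ p.2} := rfl
  rw [this]
  exact (myIsClosed_le hinf).preimage (continuous_const.prodMk continuous_id)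

/-- In a compact Hausdorff space with continuous `⊓`, `sInf A` is in the closure of the
set of infima of finite nonempty subsets of `A`. -/
theorem sInf_mem_closure_finInfs (hinf : Continuous fun p : Y × Y => p.1 ⊓ p.2)
    (A : Set Y) (hA : A.Nonempty) :
    sInf A ∈ closure {y : Y | ∃ B : Set Y, B ⊆ A ∧ B.Finite ∧ B.Nonempty ∧ y = sInf B} := by
  obtain ⟨a₀, ha₀⟩ := hA
  haveI : Nonempty ↥A := ⟨⟨a₀, ha₀⟩⟩
  set φ : Finset ↥A → Y := fun F => sInf (insert a₀ ((↑) '' (F : Set ↥A))) with hφ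
  set f : Filter Y := Filter.map φ Filter.atTop with hf
  haveI : f.NeBot := Filter.map_neBot
  obtain ⟨y, hy⟩ := exists_clusterPt_of_compactSpace f
  set S : Set Y := {y : Y | ∃ B : Set Y, B ⊆ A ∧ B.Finite ∧ B.Nonempty ∧ y = sInf B} with hS
  have hφS : ∀ F, φ F ∈ S := by
    intro F
    refine ⟨insert a₀ ((↑) '' (F : Set ↥A)), ?_, ?_, ⟨a₀, mem_insert _ _⟩, rfl⟩
    · rintro b (rfl | ⟨⟨b, hb⟩, -, rfl⟩) <;> assumption
    · exact (F.finite_toSet.image _).insert a₀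
  -- y is in each closed set that eventually contains the net
  have key : ∀ C : Set Y, IsClosed C → (∀ᶠ z in f, z ∈ C) → y ∈ C := by
    intro C hC hev
    have : ClusterPt y (𝓟 C) := hy.mono (le_principal_iff.mpr hev)
    rw [← mem_closure_iff_clusterPt] at this
    rwa [hC.closure_eq] at this
  have hymem : y ∈ closure S := by
    apply key (closure S) isClosed_closure
    rw [hf, Filter.eventually_map]
    exact Filter.Eventually.of_forall fun F => subset_closure (hφS F)
  -- y is a lower bound of A
  have hylb : ∀ a ∈ A, y ≤ a := by
    intro a ha
    apply key _ (myIsClosed_le_const hinf a)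
    rw [hf, Filter.eventually_map]
    filter_upwards [Filter.eventually_ge_atTop ({⟨a, ha⟩} : Finset ↥A)] with F hF
    exact sInf_le (Set.mem_insert_of_mem _ ⟨⟨a, ha⟩, hF (Finset.mem_singleton_self _), rfl⟩)
  -- sInf A ≤ y
  have hsle : sInf A ≤ y := by
    apply key _ (myIsClosed_const_le hinf (sInf A))
    rw [hf, Filter.eventually_map]
    refine Filter.Eventually.of_forall fun F => sInf_le_sInf ?_
    rintro b (rfl | ⟨⟨b, hb⟩, -, rfl⟩) <;> assumption
  have : y = sInf A := le_antisymm (le_sInf hylb) hsle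
  rwa [this] at hymem


theorem finInf_mem {V : Set Y} (hVi : ∀ a ∈ V, ∀ b ∈ V, a ⊓ b ∈ V)
    {B : Set Y} (hBf : B.Finite) (hBne : B.Nonempty) (hBV : B ⊆ V) : sInf B ∈ V := by
  revert hBne hBV
  refine Set.Finite.induction_on (motive := fun B _ => B.Nonempty → B ⊆ V → sInf B ∈ V) B hBf
    (fun hBne _ => absurd hBne (by simp)) ?_
  rintro a B ha hB ih hBne hBV
  · rcases B.eq_empty_or_nonempty with rfl | hne
    · simpa using hBV (Set.mem_insert a ∅)
    · rw [sInf_insert]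
      exact hVi _ (hBV (Set.mem_insert _ _)) _
        (ih hne fun b hb => hBV (Set.mem_insert_of_mem _ hb))

theorem sInf_mem_of_isClosed (hinf : Continuous fun p : Y × Y => p.1 ⊓ p.2)
    {V : Set Y} (hVc : IsClosed V) (hVi : ∀ a ∈ V, ∀ b ∈ V, a ⊓ b ∈ V)
    {A : Set Y} (hAV : A ⊆ V) (hA : A.Nonempty) : sInf A ∈ V := by
  have h1 := sInf_mem_closure_finInfs hinf A hA
  have h2 : {y : Y | ∃ B : Set Y, B ⊆ A ∧ B.Finite ∧ B.Nonempty ∧ y = sInf B} ⊆ V := by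
    rintro y ⟨B, hBA, hBf, hBne, rfl⟩
    exact finInf_mem hVi hBf hBne (hBA.trans hAV)
  have := closure_mono h2 h1
  rwa [hVc.closure_eq] at this

/-- Given `a ∈ A` and a neighborhood `U` of `sInf A`, there is a finite subset `B ⊆ A`
containing `a` with `sInf B ∈ U`. -/
theorem exists_finite_sInf_mem (hinf : Continuous fun p : Y × Y => p.1 ⊓ p.2)
    {A : Set Y} {a : Y} (ha : a ∈ A) {U : Set Y} (hU : U ∈ 𝓝 (sInf A)) :
    ∃ B : Set Y, B ⊆ A ∧ B.Finite ∧ a ∈ B ∧ sInf B ∈ U := by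
  set S : Set Y := {y : Y | ∃ B : Set Y, B ⊆ A ∧ B.Finite ∧ B.Nonempty ∧ y = sInf B} with hS
  have h1 : sInf A ∈ closure S := sInf_mem_closure_finInfs hinf A ⟨a, ha⟩
  have hc : Continuous fun z : Y => a ⊓ z := hinf.comp (continuous_const.prodMk continuous_id)
  have h2 : sInf A ∈ closure ((fun z : Y => a ⊓ z) '' S) := by
    have := image_closure_subset_closure_image (s := S) hc
    have h3 : a ⊓ sInf A = sInf A := inf_eq_right.mpr (sInf_le ha)
    have h4 : a ⊓ sInf A ∈ (fun z : Y => a ⊓ z) '' closure S := ⟨_, h1, rfl⟩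
    rw [h3] at h4
    exact this h4
  rw [mem_closure_iff_nhds] at h2
  obtain ⟨y, hyU, z, ⟨B, hBA, hBf, hBne, rfl⟩, rfl⟩ := h2 U hU
  refine ⟨insert a B, Set.insert_subset ha hBA, hBf.insert a, Set.mem_insert _ _, ?_⟩
  rwa [sInf_insert]

/-- The closure of an inf-closed set is inf-closed. -/
theorem infClosed_closure (hinf : Continuous fun p : Y × Y => p.1 ⊓ p.2)
    {V : Set Y} (hVi : ∀ a ∈ V, ∀ b ∈ V, a ⊓ b ∈ V) :
    ∀ a ∈ closure V, ∀ b ∈ closure V, a ⊓ b ∈ closure V := by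
  intro a ha b hb
  have hmt : Set.MapsTo (fun p : Y × Y => p.1 ⊓ p.2) (V ×ˢ V) V := by
    rintro ⟨u, v⟩ ⟨hu, hv⟩; exact hVi u hu v hv
  have := hmt.closure hinf
  rw [closure_prod_eq] at this
  exact this (show (a, b) ∈ closure V ×ˢ closure V from Set.mem_prod.mpr ⟨ha, hb⟩)

/-- Continuity of a parametrized infimum over a finite index set. -/
theorem continuous_sInf_finite_image {P ι : Type*} [TopologicalSpace P]
    (hinf : Continuous fun p : Y × Y => p.1 ⊓ p.2)
    {G : Set ι} (hG : G.Finite) {f : P → ι → Y} (hf : ∀ u ∈ G, Continuous fun p => f p u) :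
    Continuous fun p => sInf (f p '' G) := by
  revert hf
  refine Set.Finite.induction_on
    (motive := fun G _ => (∀ u ∈ G, Continuous fun p => f p u) → Continuous fun p => sInf (f p '' G)) G hG
    (fun _ => by simpa using continuous_const) ?_
  rintro u G hu hGf ih hf
  simp only [Set.image_insert_eq, sInf_insert]
  exact hinf.comp ((hf u (Set.mem_insert _ _)).prodMk
    (ih fun v hv => hf v (Set.mem_insert_of_mem _ hv)))

end Helpers



noncomputable section

/-- Clamp `u` into the interval `[lo, hi]` inside the unit interval. -/
def clampI (lo hi u : I) : I :=
  ⟨max (lo : ℝ) (min (u : ℝ) (hi : ℝ)), by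
    constructor
    · exact le_trans lo.2.1 (le_max_left _ _)
    · exact max_le lo.2.2 (le_trans (min_le_left _ _) u.2.2)⟩

theorem clampI_coe (lo hi u : I) : (clampI lo hi u : ℝ) = max (lo : ℝ) (min (u : ℝ) (hi : ℝ)) := rfl

theorem clampI_mem (lo hi u : I) (h : lo ≤ hi) : clampI lo hi u ∈ Set.Icc lo hi := by
  constructor
  · exact Subtype.coe_le_coe.mp (le_max_left _ _)
  · exact Subtype.coe_le_coe.mp (max_le h (min_le_right _ _))

theorem clampI_eq_self {lo hi u : I} (h1 : lo ≤ u) (h2 : u ≤ hi) : clampI lo hi u = u := by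
  apply Subtype.ext
  rw [clampI_coe, min_eq_left (Subtype.coe_le_coe.mpr h2), max_eq_right (Subtype.coe_le_coe.mpr h1)]

theorem clampI_dist {lo hi lo' hi' u : I} (h1 : lo ≤ hi) (h2 : lo' ≤ u) (h3 : u ≤ hi') :
    |(u : ℝ) - (clampI lo hi u : ℝ)| ≤ max |(lo : ℝ) - (lo' : ℝ)| |(hi : ℝ) - (hi' : ℝ)| := by
  have h2' : (lo' : ℝ) ≤ u := h2
  have h3' : (u : ℝ) ≤ hi' := h3
  rw [clampI_coe]
  rcases le_total (u : ℝ) (hi : ℝ) with hc | hc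
  · rw [min_eq_left hc]
    rcases le_total (u : ℝ) (lo : ℝ) with hd | hd
    · rw [max_eq_left hd]
      refine le_trans ?_ (le_max_left _ _)
      rw [abs_sub_comm, abs_of_nonneg (by linarith)]
      have := le_abs_self ((lo : ℝ) - lo')
      linarith
    · rw [max_eq_right hd]; simpa using le_trans (abs_nonneg _) (le_max_left
        |(lo : ℝ) - (lo' : ℝ)| |(hi : ℝ) - (hi' : ℝ)|)
  · rw [min_eq_right hc, max_eq_right (Subtype.coe_le_coe.mpr h1)]
    refine le_trans ?_ (le_max_right _ _)
    rw [abs_of_nonneg (by linarith)]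
    have := le_abs_self ((hi' : ℝ) - hi)
    rw [abs_sub_comm] at this
    linarith

theorem continuous_clampI {P : Type*} [TopologicalSpace P] {flo fhi fu : P → I}
    (hlo : Continuous flo) (hhi : Continuous fhi) (hu : Continuous fu) :
    Continuous fun p => clampI (flo p) (fhi p) (fu p) := by
  apply Continuous.subtype_mk
  exact (continuous_subtype_val.comp hlo).max
    ((continuous_subtype_val.comp hu).min (continuous_subtype_val.comp hhi))

end


theorem continuous_sInf_Icc {X : Type*} [TopologicalSpace X]
    {Y : Type*} [CompleteLattice Y] [TopologicalSpace Y] [CompactSpace Y] [T2Space Y]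
    (hinf : Continuous fun p : Y × Y => p.1 ⊓ p.2)
    (hbasis : ∀ y : Y, (nhds y).HasBasis
      (fun s : Set Y => s ∈ nhds y ∧ ∀ a ∈ s, ∀ b ∈ s, a ⊓ b ∈ s) id)
    (h : X × I → Y) (hh : Continuous h)
    (a b : I → I) (ha : Continuous a) (hb : Continuous b) (hab : ∀ t, a t ≤ b t) :
    Continuous fun p : X × I => sInf ((fun s => h (p.1, s)) '' Set.Icc (a p.2) (b p.2)) := by
  set F : X × I → Y := fun p => sInf ((fun s => h (p.1, s)) '' Set.Icc (a p.2) (b p.2)) with hF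
  rw [continuous_iff_continuousAt]
  rintro ⟨x₀, t₀⟩
  rw [ContinuousAt, Filter.tendsto_def]
  intro U hU
  set p₀ : X × I := (x₀, t₀) with hp₀
  set C₀ : Set I := Set.Icc (a t₀) (b t₀) with hC₀
  set A₀ : Set Y := (fun s => h (x₀, s)) '' C₀ with hA₀
  set y₀ : Y := sInf A₀ with hy₀
  have hFp₀ : F p₀ = y₀ := rfl
  rw [hFp₀] at hU
  -- Step A: a closed inf-closed neighborhood V of y₀ inside U
  obtain ⟨V₁, hV₁n, hV₁c, hV₁U⟩ := exists_mem_nhds_isClosed_subset hU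
  obtain ⟨V₀, ⟨hV₀n, hV₀i⟩, hV₀sub⟩ := (hbasis y₀).mem_iff.mp (interior_mem_nhds.mpr hV₁n)
  set V : Set Y := closure V₀ with hV
  have hVc : IsClosed V := isClosed_closure
  have hVi : ∀ a ∈ V, ∀ b ∈ V, a ⊓ b ∈ V := infClosed_closure hinf hV₀i
  have hVn : V ∈ 𝓝 y₀ := Filter.mem_of_superset hV₀n subset_closure
  have hVU : V ⊆ U := by
    calc V ⊆ closure (interior V₁) := closure_mono hV₀sub
    _ ⊆ closure V₁ := closure_mono interior_subset
    _ = V₁ := hV₁c.closure_eq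
    _ ⊆ U := hV₁U
  -- Step B: an inf-closed neighborhood W of y₀ inside V
  obtain ⟨W, ⟨hWn, hWi⟩, hWsub⟩ := (hbasis y₀).mem_iff.mp (interior_mem_nhds.mpr hVn)
  have hWV : W ⊆ V := hWsub.trans interior_subset
  have hC₀ne : C₀.Nonempty := Set.nonempty_Icc.mpr (hab t₀)
  -- Step C: for each s in C₀, local data
  have key : ∀ s : I, s ∈ C₀ →
      ∃ (G : Set I) (N : Set (X × I)) (δ : ℝ), G ⊆ C₀ ∧ G.Finite ∧
        N ∈ 𝓝 p₀ ∧ 0 < δ ∧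
        ∀ p ∈ N,
          sInf ((fun u => h (p.1, clampI (a p.2) (b p.2) u)) '' G) ∈ W ∧
          ∀ s' : I, |(s' : ℝ) - (s : ℝ)| < δ →
            h (p.1, s') ⊓ sInf ((fun u => h (p.1, clampI (a p.2) (b p.2) u)) '' G) ∈ W := by
    intro s hs
    have hWo : interior W ∈ 𝓝 y₀ := interior_mem_nhds.mpr hWn
    have hsA : h (x₀, s) ∈ A₀ := ⟨s, hs, rfl⟩
    obtain ⟨B, hBA, hBf, hsB, hBW⟩ := exists_finite_sInf_mem hinf hsA hWo
    -- pull back B to a finite subset of C₀ containing s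
    have hpull : ∀ y ∈ B, ∃ u, u ∈ C₀ ∧ h (x₀, u) = y := by
      intro y hy
      obtain ⟨u, hu, rfl⟩ := hBA hy
      exact ⟨u, hu, rfl⟩
    choose! ψ hψC hψeq using hpull
    set G₀ : Set I := ψ '' B with hG₀
    have hG₀sub : G₀ ⊆ C₀ := by rintro _ ⟨y, hy, rfl⟩; exact hψC y hy
    have hG₀f : G₀.Finite := hBf.image ψ
    have hG₀im : (fun u => h (x₀, u)) '' G₀ = B := by
      ext y
      constructor
      · rintro ⟨_, ⟨z, hz, rfl⟩, rfl⟩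
        show h (x₀, ψ z) ∈ B
        rw [hψeq z hz]; exact hz
      · intro hy
        exact ⟨ψ y, ⟨y, hy, rfl⟩, hψeq y hy⟩
    set G : Set I := insert s G₀ with hG
    have hGsub : G ⊆ C₀ := Set.insert_subset hs hG₀sub
    have hGf : G.Finite := hG₀f.insert s
    have hGim : (fun u => h (x₀, u)) '' G = B := by
      rw [hG, Set.image_insert_eq, hG₀im, Set.insert_eq_of_mem hsB]
    set Φ : X × I → Y :=
      fun p => sInf ((fun u => h (p.1, clampI (a p.2) (b p.2) u)) '' G) with hΦ
    have hΦcont : Continuous Φ := by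
      apply continuous_sInf_finite_image hinf hGf
      intro u hu
      exact hh.comp (continuous_fst.prodMk (continuous_clampI (ha.comp continuous_snd)
        (hb.comp continuous_snd) continuous_const))
    have hΦp₀ : Φ p₀ = sInf B := by
      rw [hΦ]
      have : (fun u => h (x₀, clampI (a t₀) (b t₀) u)) '' G = (fun u => h (x₀, u)) '' G := by
        apply Set.image_congr
        intro u hu
        rw [clampI_eq_self (hGsub hu).1 (hGsub hu).2]
      simpa [hp₀] using congrArg sInf (this.trans hGim)
    have hΦp₀W : Φ p₀ ∈ interior W := by rw [hΦp₀]; exact hBW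
    set g : (X × I) × I → Y := fun q => h (q.1.1, q.2) ⊓ Φ q.1 with hg
    have hgcont : Continuous g :=
      hinf.comp ((hh.comp ((continuous_fst.comp continuous_fst).prodMk
        continuous_snd)).prodMk (hΦcont.comp continuous_fst))
    have hgval : g (p₀, s) ∈ interior W := by
      have h1 : Φ p₀ ≤ h (x₀, s) := by
        rw [hΦp₀, ← hGim]
        exact sInf_le ⟨s, Set.mem_insert _ _, rfl⟩
      have : g (p₀, s) = Φ p₀ := inf_eq_right.mpr h1
      rw [this]; exact hΦp₀W
    have hpre : g ⁻¹' interior W ∈ 𝓝 (p₀, s) :=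
      hgcont.continuousAt.preimage_mem_nhds (isOpen_interior.mem_nhds hgval)
    rw [mem_nhds_prod_iff] at hpre
    obtain ⟨M₁, hM₁, M₂, hM₂, hMsub⟩ := hpre
    obtain ⟨δ, hδ, hball⟩ := Metric.mem_nhds_iff.mp hM₂
    refine ⟨G, M₁ ∩ Φ ⁻¹' interior W, δ, hGsub, hGf,
      Filter.inter_mem hM₁ (hΦcont.continuousAt.preimage_mem_nhds
        (isOpen_interior.mem_nhds hΦp₀W)), hδ, ?_⟩
    rintro p ⟨hpM, hpΦ⟩
    refine ⟨interior_subset hpΦ, fun s' hs' => ?_⟩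
    have hs'M : s' ∈ M₂ := hball (by
      rw [Metric.mem_ball, Subtype.dist_eq, Real.dist_eq]; exact hs')
    exact interior_subset (hMsub (Set.mk_mem_prod hpM hs'M))
  choose G N δ hGsub hGf hN hδ hmain using key
  -- cover C₀ by finitely many balls
  have hC₀cpt : IsCompact C₀ := by
    have hCeq : C₀ = Subtype.val ⁻¹' (Set.Icc ((a t₀ : ℝ)) ((b t₀ : ℝ))) := by
      ext u
      simp only [hC₀, Set.mem_Icc, Set.mem_preimage, ← Subtype.coe_le_coe]
    rw [hCeq]
    exact (isClosed_Icc.preimage continuous_subtype_val).isCompact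
  obtain ⟨J, hJcover⟩ := hC₀cpt.elim_nhds_subcover'
    (fun s hs => Metric.ball s (δ s hs / 2))
    (fun s hs => Metric.ball_mem_nhds _ (half_pos (hδ s hs)))
  have hJne : J.Nonempty := by
    have := hJcover ((Set.nonempty_Icc.mpr (hab t₀)).some_mem)
    rw [Set.mem_iUnion₂] at this
    obtain ⟨j, hj, -⟩ := this
    exact ⟨j, hj⟩
  set ε : ℝ := J.inf' hJne (fun j => δ j j.2 / 2) with hε
  have hεpos : 0 < ε := by
    rw [hε, Finset.lt_inf'_iff]
    exact fun j hj => half_pos (hδ j j.2)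
  -- the final neighborhood
  set N₂ : Set (X × I) := {p : X × I | |(a p.2 : ℝ) - (a t₀ : ℝ)| < ε ∧
      |(b p.2 : ℝ) - (b t₀ : ℝ)| < ε} with hN₂
  have hca : Continuous fun p : X × I => ((a p.2 : ℝ)) :=
    continuous_subtype_val.comp (ha.comp continuous_snd)
  have hcb : Continuous fun p : X × I => ((b p.2 : ℝ)) :=
    continuous_subtype_val.comp (hb.comp continuous_snd)
  have hN₂n : N₂ ∈ 𝓝 p₀ := by
    have h1 : N₂ = (fun p : X × I => ((a p.2 : ℝ))) ⁻¹' (Metric.ball (a t₀ : ℝ) ε) ∩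
        (fun p : X × I => ((b p.2 : ℝ))) ⁻¹' (Metric.ball (b t₀ : ℝ) ε) := by
      ext p
      simp [hN₂, Metric.mem_ball, Real.dist_eq]
    rw [h1]
    apply IsOpen.mem_nhds ((Metric.isOpen_ball.preimage hca).inter
      (Metric.isOpen_ball.preimage hcb))
    constructor <;> simp [Metric.mem_ball, hεpos, hp₀]
  have hNstar : ((⋂ j ∈ J, N j j.2) ∩ N₂) ∈ 𝓝 p₀ :=
    Filter.inter_mem ((Filter.biInter_finset_mem J).mpr (fun j _ => hN j j.2)) hN₂n
  refine Filter.mem_of_superset hNstar ?_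
  rintro ⟨x, t⟩ ⟨hpN, hpa, hpb⟩
  rw [Set.mem_iInter₂] at hpN
  -- now show F (x, t) ∈ U
  set Cp : Set I := Set.Icc (a t) (b t) with hCp
  set Ap : Set Y := (fun s => h (x, s)) '' Cp with hAp
  have hApne : Ap.Nonempty := (Set.nonempty_Icc.mpr (hab t)).image _
  set φ : ↥C₀ → Y := fun j => sInf ((fun u => h (x, clampI (a t) (b t) u)) '' G j j.2) with hφ
  set Q : Y := J.inf' hJne φ with hQ
  have hφW : ∀ j ∈ J, φ j ∈ W := fun j hj => (hmain j j.2 (x, t) (hpN j hj)).1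
  have hQW : Q ∈ W := Finset.inf'_mem W hWi J hJne φ hφW
  have hQge : sInf Ap ≤ Q := by
    rw [hQ]
    apply Finset.le_inf'
    intro j hj
    apply sInf_le_sInf
    rintro _ ⟨u, hu, rfl⟩
    exact ⟨clampI (a t) (b t) u, clampI_mem _ _ _ (hab t), rfl⟩
  have hclaim : ∀ a' ∈ Ap, a' ⊓ Q ∈ W := by
    rintro _ ⟨s', hs', rfl⟩
    have hclamp : clampI (a t₀) (b t₀) s' ∈ C₀ := clampI_mem _ _ _ (hab t₀)
    have := hJcover hclamp
    rw [Set.mem_iUnion₂] at this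
    obtain ⟨j, hjJ, hjball⟩ := this
    have hεle : ε ≤ δ j j.2 / 2 := Finset.inf'_le _ hjJ
    have hd1 : |(s' : ℝ) - (clampI (a t₀) (b t₀) s' : ℝ)| < ε := by
      have := clampI_dist (lo := a t₀) (hi := b t₀) (hab t₀) hs'.1 hs'.2
      have hmax : max |(a t₀ : ℝ) - (a t : ℝ)| |(b t₀ : ℝ) - (b t : ℝ)| < ε := by
        apply max_lt
        · rw [abs_sub_comm]; exact hpa
        · rw [abs_sub_comm]; exact hpb
      exact lt_of_le_of_lt this hmax
    have hd2 : |(clampI (a t₀) (b t₀) s' : ℝ) - (j : ℝ)| < δ j j.2 / 2 := by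
      rw [Metric.mem_ball, Subtype.dist_eq, Real.dist_eq] at hjball
      exact hjball
    have hdist : |(s' : ℝ) - ((j : I) : ℝ)| < δ j j.2 := by
      have htri := abs_sub_le (s' : ℝ) (clampI (a t₀) (b t₀) s' : ℝ) ((j : I) : ℝ)
      have : ε + δ j j.2 / 2 ≤ δ j j.2 := by linarith
      linarith
    have h1 : h (x, s') ⊓ φ j ∈ W := (hmain j j.2 (x, t) (hpN j hjJ)).2 s' hdist
    have hQeq : φ j ⊓ Q = Q := inf_eq_right.mpr (Finset.inf'_le _ hjJ)
    have h2 : h (x, s') ⊓ Q = (h (x, s') ⊓ φ j) ⊓ Q := by rw [inf_assoc, hQeq]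
    rw [h2]
    exact hWi _ h1 _ hQW
  -- conclude
  set A' : Set Y := (fun a' => a' ⊓ Q) '' Ap with hA'
  have hA'V : A' ⊆ V := by
    rintro _ ⟨a', ha', rfl⟩
    exact hWV (hclaim a' ha')
  have hA'ne : A'.Nonempty := hApne.image _
  have hsInfA' : sInf A' ∈ V := sInf_mem_of_isClosed hinf hVc hVi hA'V hA'ne
  have heq : sInf A' = sInf Ap := by
    apply le_antisymm
    · apply le_sInf
      intro a' ha'
      exact le_trans (sInf_le ⟨a', ha', rfl⟩) inf_le_left
    · apply le_sInf
      rintro _ ⟨a', ha', rfl⟩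
      exact le_inf (sInf_le ha') hQge
  have : F (x, t) ∈ V := by
    have : F (x, t) = sInf Ap := rfl
    rw [this, ← heq]
    exact hsInfA'
  exact hVU this

/-- Given a homotopy `h` through monotone maps from `g₁` to `g₂`, where `X` is a compact
Hausdorff preordered space and `Y` is a complete lattice carrying a Lawson-lattice
topology, the maps `j (x, t) = ⨅ h (x, [0, 1 - t])` and `k (x, t) = ⨅ h (x, [t, 1])`
are continuous and monotone (for the product order), with `j (·, 0) = k (·, 0)`,
`j (·, 1) = g₁` and `k (·, 1) = g₂`. -/
theorem stmt_10 {X Y : Type*} [TopologicalSpace X] [Preorder X]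
    [CompactSpace X] [T2Space X]
    [CompleteLattice Y] [TopologicalSpace Y] [CompactSpace Y] [T2Space Y]
    (hinf : Continuous fun p : Y × Y => p.1 ⊓ p.2)
    (hbasis : ∀ y : Y, (nhds y).HasBasis
      (fun s : Set Y => s ∈ nhds y ∧ ∀ a ∈ s, ∀ b ∈ s, a ⊓ b ∈ s) id)
    (g₁ g₂ : X → Y) (hg₁ : Continuous g₁) (hg₁m : Monotone g₁)
    (hg₂ : Continuous g₂) (hg₂m : Monotone g₂)
    (h : X × I → Y) (hh : Continuous h)
    (hh0 : ∀ x, h (x, 0) = g₁ x) (hh1 : ∀ x, h (x, 1) = g₂ x)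
    (hhm : ∀ t : I, Monotone fun x : X => h (x, t))
    (j k : X × I → Y)
    (hj : ∀ x t, j (x, t) =
      sInf ((fun s : I => h (x, s)) '' {s : I | (s : ℝ) ∈ Set.Icc 0 (1 - (t : ℝ))}))
    (hk : ∀ x t, k (x, t) =
      sInf ((fun s : I => h (x, s)) '' {s : I | (s : ℝ) ∈ Set.Icc (t : ℝ) 1})) :
    Continuous j ∧ Continuous k ∧ Monotone j ∧ Monotone k ∧
      (∀ x, j (x, 0) = k (x, 0)) ∧ (∀ x, j (x, 1) = g₁ x) ∧ (∀ x, k (x, 1) = g₂ x) := by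
  have hjset : ∀ t : I, {s : I | (s : ℝ) ∈ Set.Icc 0 (1 - (t : ℝ))} =
      Set.Icc (0 : I) (σ t) := by
    intro t
    ext s
    simp only [Set.mem_setOf_eq, Set.mem_Icc]
    constructor
    · rintro ⟨h1, h2⟩
      refine ⟨unitInterval.nonneg', Subtype.coe_le_coe.mp ?_⟩
      rw [unitInterval.coe_symm_eq]
      exact h2
    · rintro ⟨h1, h2⟩
      have := Subtype.coe_le_coe.mpr h2
      rw [unitInterval.coe_symm_eq] at this
      exact ⟨s.2.1, this⟩
  have hkset : ∀ t : I, {s : I | (s : ℝ) ∈ Set.Icc (t : ℝ) 1} = Set.Icc t (1 : I) := by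
    intro t
    ext s
    simp only [Set.mem_setOf_eq, Set.mem_Icc]
    constructor
    · rintro ⟨h1, h2⟩
      exact ⟨Subtype.coe_le_coe.mp h1, unitInterval.le_one'⟩
    · rintro ⟨h1, h2⟩
      exact ⟨Subtype.coe_le_coe.mpr h1, s.2.2⟩
  have hjfun : j = fun p : X × I =>
      sInf ((fun s => h (p.1, s)) '' Set.Icc ((fun _ : I => (0 : I)) p.2) (σ p.2)) := by
    funext p
    rw [show j p = j (p.1, p.2) from rfl, hj p.1 p.2, hjset]
  have hkfun : k = fun p : X × I =>
      sInf ((fun s => h (p.1, s)) '' Set.Icc (id p.2) ((fun _ : I => (1 : I)) p.2)) := by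
    funext p
    rw [show k p = k (p.1, p.2) from rfl, hk p.1 p.2, hkset]
    rfl
  refine ⟨?_, ?_, ?_, ?_, ?_, ?_, ?_⟩
  · rw [hjfun]
    exact continuous_sInf_Icc hinf hbasis h hh _ _ continuous_const
      unitInterval.continuous_symm (fun _ => unitInterval.nonneg')
  · rw [hkfun]
    exact continuous_sInf_Icc hinf hbasis h hh _ _ continuous_id continuous_const
      (fun _ => unitInterval.le_one')
  · -- Monotone j
    intro p q hpq
    rw [show j p = j (p.1, p.2) from rfl, show j q = j (q.1, q.2) from rfl,
      hj p.1 p.2, hj q.1 q.2]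
    apply le_sInf
    rintro _ ⟨s, hs, rfl⟩
    have hcoe : (p.2 : ℝ) ≤ (q.2 : ℝ) := Subtype.coe_le_coe.mpr hpq.2
    have hs' : (s : ℝ) ∈ Set.Icc 0 (1 - (p.2 : ℝ)) :=
      ⟨hs.1, le_trans hs.2 (by linarith)⟩
    exact le_trans (sInf_le ⟨s, hs', rfl⟩) (hhm s hpq.1)
  · -- Monotone k
    intro p q hpq
    rw [show k p = k (p.1, p.2) from rfl, show k q = k (q.1, q.2) from rfl,
      hk p.1 p.2, hk q.1 q.2]
    apply le_sInf
    rintro _ ⟨s, hs, rfl⟩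
    have hcoe : (p.2 : ℝ) ≤ (q.2 : ℝ) := Subtype.coe_le_coe.mpr hpq.2
    have hs' : (s : ℝ) ∈ Set.Icc (p.2 : ℝ) 1 := ⟨le_trans hcoe hs.1, hs.2⟩
    exact le_trans (sInf_le ⟨s, hs', rfl⟩) (hhm s hpq.1)
  · -- j (x, 0) = k (x, 0)
    intro x
    rw [hj x 0, hk x 0]
    norm_num
  · -- j (x, 1) = g₁ x
    intro x
    have hset : {s : I | (s : ℝ) ∈ Set.Icc 0 (1 - ((1 : I) : ℝ))} = {(0 : I)} := by
      ext s
      simp only [Set.mem_setOf_eq, Set.mem_Icc, Set.mem_singleton_iff]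
      constructor
      · rintro ⟨h1, h2⟩
        apply Subtype.ext
        have : ((1 : I) : ℝ) = 1 := rfl
        rw [this] at h2
        have : ((0 : I) : ℝ) = 0 := rfl
        rw [this]
        linarith
      · rintro rfl
        norm_num
    rw [hj x 1, hset, Set.image_singleton, sInf_singleton, hh0]
  · -- k (x, 1) = g₂ x
    intro x
    have hset : {s : I | (s : ℝ) ∈ Set.Icc ((1 : I) : ℝ) 1} = {(1 : I)} := by
      ext s
      simp only [Set.mem_setOf_eq, Set.mem_Icc, Set.mem_singleton_iff]
      constructor
      · rintro ⟨h1, h2⟩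
        apply Subtype.ext
        have : ((1 : I) : ℝ) = 1 := rfl
        rw [this] at h1 ⊢
        linarith
      · rintro rfl
        norm_num
    rw [hk x 1, hset, Set.image_singleton, sInf_singleton, hh1]
end

section
/- Let L be a complete lattice equipped with a compact Hausdorff topology for which both the binary infimum ⊓ : L × L → L and the binary supremum ⊔ : L × L → L are jointly continuous, and such that every point of L has a neighborhood basis of sets closed under ⊓ and a neighborhood basis of sets closed under ⊔ (i.e., L is a hypercontinuous lattice equipped with its Lawson topology). If the underlying topological space of L is homotopy equivalent to a connected CW complex, then L is past contractible: there exists a continuous H : L × [0,1] → L, monotone with respect to the product of the lattice order on L and the reverse of the standard order on [0,1], with H(·,0) = id_L and H(·,1) the constant map at ⊥ (the minimum of L). -/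
open unitInterval

universe u

section Aux

open TopologicalSpace Topology CategoryTheory CategoryTheory.Limits TopCat Filter Set

universe v w

/-- If a space carries (a topology finer than, hence equal to) the final topology with
respect to a jointly surjective family of continuous maps from locally path-connected
spaces, then it is locally path-connected. -/
theorem aux_lpc_of_jointly_surjective {Y : Type*} [tY : TopologicalSpace Y] {ι : Type*}
    (X : ι → Type*) [tX : ∀ i, TopologicalSpace (X i)] [∀ i, LocallyPathConnectedSpace (X i)]
    (f : ∀ i, X i → Y) (hle : tY ≤ ⨆ i, (tX i).coinduced (f i))
    (hcont : ∀ i, Continuous (f i)) (hsurj : ∀ y : Y, ∃ i x, f i x = y) :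
    LocallyPathConnectedSpace Y := by
  have hq : IsQuotientMap (fun p : Σ i, X i => f p.1 p.2) := by
    refine ⟨⟨?_⟩, ?_⟩
    rotate_left
    · intro y
      obtain ⟨i, x, hx⟩ := hsurj y
      exact ⟨⟨i, x⟩, hx⟩
    · refine le_antisymm ?_ (continuous_iff_coinduced_le.1 (continuous_sigma (f := fun p : Σ i, X i => f p.1 p.2) hcont))
      refine hle.trans (iSup_le fun i => ?_)
      rw [show (tX i).coinduced (f i)
          = ((tX i).coinduced (Sigma.mk i)).coinduced (fun p : Σ i, X i => f p.1 p.2) from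
        (coinduced_compose).symm]
      exact coinduced_mono (le_iSup (fun i => (tX i).coinduced (Sigma.mk i)) i)
  exact hq.locPathConnectedSpace

/-- A colimit in `TopCat` of locally path-connected spaces is locally path-connected. -/
theorem aux_lpc_colimit {J : Type v} [SmallCategory J] (F : J ⥤ TopCat.{max v u})
    [∀ j, LocallyPathConnectedSpace (F.obj j)] :
    LocallyPathConnectedSpace (colimit F : TopCat.{max v u}) := by
  refine aux_lpc_of_jointly_surjective (fun j => (F.obj j : Type (max v u)))
    (fun j => (colimit.ι F j : F.obj j ⟶ colimit F)) ?_ (fun j => (colimit.ι F j).hom.continuous) ?_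
  · exact le_of_eq (TopCat.colimit_topology F)
  · intro y
    obtain ⟨j, x, hx⟩ := Concrete.colimit_exists_rep F y
    exact ⟨j, x, hx⟩

/-- A pushout in `TopCat` of locally path-connected spaces (along any maps from any space)
is locally path-connected. -/
theorem aux_lpc_pushout {S X D : TopCat.{u}} (f : S ⟶ X) (g : S ⟶ D)
    [LocallyPathConnectedSpace X] [LocallyPathConnectedSpace D] :
    LocallyPathConnectedSpace (colimit (span f g) : TopCat.{u}) := by
  set F := span f g with hF
  let X' : Bool → TopCat.{u} := fun b => bif b then X else D
  haveI : ∀ b, LocallyPathConnectedSpace (X' b) := fun b => by cases b <;> assumption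
  let ff : ∀ b, ↑(X' b) → ↑(colimit F) := fun b => match b with
    | true => (colimit.ι F WalkingSpan.left : X ⟶ _)
    | false => (colimit.ι F WalkingSpan.right : D ⟶ _)
  refine aux_lpc_of_jointly_surjective (fun b => ↑(X' b)) ff ?_ ?_ ?_
  · refine le_trans (le_of_eq (TopCat.colimit_topology F)) (iSup_le fun j => ?_)
    match j with
    | WalkingSpan.left =>
        exact le_iSup (fun b => TopologicalSpace.coinduced (ff b) inferInstance) true
    | WalkingSpan.right =>
        exact le_iSup (fun b => TopologicalSpace.coinduced (ff b) inferInstance) false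
    | WalkingSpan.zero =>
        have hw : colimit.ι F WalkingSpan.zero
            = F.map WalkingSpan.Hom.fst ≫ colimit.ι F WalkingSpan.left :=
          (colimit.w F WalkingSpan.Hom.fst).symm
        rw [hw]
        have h2 : ⇑(F.map WalkingSpan.Hom.fst ≫ colimit.ι F WalkingSpan.left)
            = ⇑(colimit.ι F WalkingSpan.left) ∘ ⇑(F.map WalkingSpan.Hom.fst) := rfl
        rw [h2, ← coinduced_compose]
        refine le_trans (coinduced_mono
          (continuous_iff_coinduced_le.1 (F.map WalkingSpan.Hom.fst).hom.continuous)) ?_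
        exact le_iSup (fun b => TopologicalSpace.coinduced (ff b) inferInstance) true
  · intro b
    match b with
    | true => exact (colimit.ι F WalkingSpan.left).hom.continuous
    | false => exact (colimit.ι F WalkingSpan.right).hom.continuous
  · intro y
    obtain ⟨j, x, hx⟩ := Concrete.colimit_exists_rep F y
    match j with
    | WalkingSpan.left => exact ⟨true, x, hx⟩
    | WalkingSpan.right => exact ⟨false, x, hx⟩
    | WalkingSpan.zero =>
        refine ⟨true, F.map WalkingSpan.Hom.fst x, ?_⟩
        show (colimit.ι F WalkingSpan.left) (F.map WalkingSpan.Hom.fst x) = y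
        rw [← comp_apply, colimit.w F WalkingSpan.Hom.fst]
        exact hx

/-- A closed ball in a real normed space is locally path-connected. -/
theorem aux_lpc_closedBall {E : Type*} [NormedAddCommGroup E] [NormedSpace ℝ E] (z : E) (r : ℝ) :
    LocallyPathConnectedSpace (Metric.closedBall z r) := by
  refine LocallyPathConnectedSpace.of_bases
    (p := fun _ s => 0 < s) (s := fun x s => Subtype.val ⁻¹' Metric.ball (x : E) s) ?_ ?_
  · intro x
    rw [nhds_induced]
    exact (Metric.nhds_basis_ball).comap _
  · intro x ε hε
    have hW : IsPathConnected (Metric.ball (x : E) ε ∩ Metric.closedBall z r) := by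
      apply Convex.isPathConnected ((convex_ball _ _).inter (convex_closedBall _ _))
      exact ⟨x, Metric.mem_ball_self hε, x.2⟩
    have h1 := hW.preimage_coe (U := Metric.closedBall z r) Set.inter_subset_right
    have he : (Subtype.val ⁻¹' (Metric.ball (x : E) ε ∩ Metric.closedBall z r) :
        Set (Metric.closedBall z r)) = Subtype.val ⁻¹' Metric.ball (x : E) ε := by
      ext y; simp [y.2]
    rwa [he] at h1

/-- Disks are locally path-connected. -/
theorem aux_lpc_disk (n : ℕ) : LocallyPathConnectedSpace (𝔻 n : TopCat.{u}) := by
  haveI : LocallyPathConnectedSpace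
      (Metric.closedBall (0 : EuclideanSpace ℝ <| Fin <| n) 1) := aux_lpc_closedBall _ _
  exact (Homeomorph.ulift.symm :
    Metric.closedBall (0 : EuclideanSpace ℝ <| Fin <| n) 1 ≃ₜ
      _).isQuotientMap.locPathConnectedSpace

/-- The point of a colimit cocone in `TopCat` of locally path-connected spaces is
locally path-connected. -/
theorem aux_lpc_isColimit {J : Type*} [Category J] {F : J ⥤ TopCat.{u}} (c : Cocone F)
    (hc : IsColimit c) [∀ j, LocallyPathConnectedSpace (F.obj j)] :
    LocallyPathConnectedSpace c.pt := by
  refine aux_lpc_of_jointly_surjective (fun j => (F.obj j : Type u)) (fun j => c.ι.app j)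
    (le_of_eq (TopCat.coinduced_of_isColimit c hc)) (fun j => (c.ι.app j).hom.continuous) ?_
  intro y
  obtain ⟨j, x, hx⟩ := Types.jointly_surjective_of_isColimit (isColimitOfPreserves (forget TopCat) hc) y
  exact ⟨j, x, hx⟩

/-- CW-complexes are locally path-connected. -/
theorem aux_lpc_cw {C : TopCat.{u}} (K : TopCat.CWComplex C) : LocallyPathConnectedSpace C := by
  have hsk : ∀ n : ℕ, LocallyPathConnectedSpace (K.F.obj n) := by
    intro n
    induction n with
    | zero =>
        exact ⟨fun x => PEmpty.elim ((initial.to (TopCat.of PEmpty.{u+1})) (K.isoBot.hom x))⟩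
    | succ n ih =>
        let att := K.attachCells n (not_isMax n)
        haveI : LocallyPathConnectedSpace att.cofan₂.pt := by
          exact @aux_lpc_isColimit _ _ _ _ att.isColimit₂ (fun _ => aux_lpc_disk n)
        haveI := aux_lpc_pushout att.g₁ att.m
        exact (TopCat.homeoOfIso att.isPushout.isoPushout).symm.isQuotientMap.locallyPathConnectedSpace
  haveI : ∀ j : ℕ, LocallyPathConnectedSpace (K.F.obj j) := hsk
  exact aux_lpc_isColimit _ K.isColimit

variable {L : Type w} [CompleteLattice L] [TopologicalSpace L] [CompactSpace L]

/-- In a compact space whose order is topologically closed, a net that is eventually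
above `b`, eventually below every member of a set `S`, and such that `b` is the only
point between `b` and the lower bounds of `S`, converges to `b`. -/
theorem aux_tendsto_of_bounds [OrderClosedTopology L] {ι : Type*} {F : Filter ι} [F.NeBot]
    {f : ι → L} {b : L} {S : Set L}
    (h1 : ∀ᶠ j in F, b ≤ f j) (h3 : ∀ s ∈ S, ∀ᶠ j in F, f j ≤ s)
    (h2 : ∀ z, b ≤ z → (∀ s ∈ S, z ≤ s) → z = b) :
    Tendsto f F (𝓝 b) := by
  by_contra hT
  obtain ⟨U, hUo, hbU, hUF⟩ : ∃ U, IsOpen U ∧ b ∈ U ∧ ¬ (∀ᶠ j in F, f j ∈ U) := by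
    by_contra h
    push_neg at h
    refine hT fun V hV => ?_
    obtain ⟨U, hUV, hUo, hbU⟩ := mem_nhds_iff.1 hV
    exact ((h U hUo hbU).mono fun j hj => hUV hj)
  have hG : (Filter.map f F ⊓ Filter.principal Uᶜ).NeBot := by
    rw [Filter.inf_principal_neBot_iff]
    intro s hs
    by_contra hemp
    rw [Set.not_nonempty_iff_eq_empty] at hemp
    have hsU : s ⊆ U := fun x hx => by
      by_contra hxU
      exact absurd (Set.eq_empty_iff_forall_notMem.1 hemp x) (by simp [hx, hxU])
    exact hUF (Filter.mem_map.1 (Filter.mem_of_superset hs hsU))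
  obtain ⟨𝒰, h𝒰⟩ := Filter.exists_ultrafilter_le (Filter.map f F ⊓ Filter.principal Uᶜ)
  obtain ⟨z, -, hz⟩ := isCompact_univ.ultrafilter_le_nhds 𝒰 (by simp)
  have hmem : ∀ A : Set L, IsClosed A → A ∈ 𝒰 → z ∈ A := by
    intro A hA hAU
    by_contra hzA
    have hcA : Aᶜ ∈ 𝒰 := hz (hA.isOpen_compl.mem_nhds hzA)
    obtain ⟨w, hw⟩ := Filter.nonempty_of_mem (Filter.inter_mem hAU hcA)
    exact hw.2 hw.1
  have hzU : z ∈ Uᶜ :=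
    hmem _ hUo.isClosed_compl (h𝒰 (Filter.mem_inf_of_right (Filter.mem_principal_self _)))
  have hbz : b ≤ z := by
    refine hmem {y | b ≤ y} (isClosed_le continuous_const continuous_id) ?_
    exact h𝒰 (Filter.mem_inf_of_left (Filter.mem_map.2 (by exact h1)))
  have hzS : ∀ s ∈ S, z ≤ s := by
    intro s hs
    refine hmem (Set.Iic s) isClosed_Iic ?_
    exact h𝒰 (Filter.mem_inf_of_left (Filter.mem_map.2 (by exact h3 s hs)))
  exact hzU (h2 z hbz hzS ▸ hbU)

/-- In a compact topological inf-semilattice, the infimum of a nonempty subset of a closed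
sub-inf-semilattice belongs to it. -/
theorem aux_sInf_mem_of_closed_semilattice [OrderClosedTopology L] {W S' : Set L}
    (hWc : IsClosed W) (hWs : ∀ a ∈ W, ∀ b ∈ W, a ⊓ b ∈ W)
    (hne : S'.Nonempty) (hsub : S' ⊆ W) : sInf S' ∈ W := by
  classical
  obtain ⟨s₀, hs₀⟩ := hne
  set f : Finset S' → L := fun t => t.inf Subtype.val ⊓ s₀ with hf
  have hfW : ∀ t, f t ∈ W := by
    intro t
    induction t using Finset.induction_on with
    | empty => simpa [hf] using hsub hs₀
    | @insert a t ha ih =>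
        have he : f (insert a t) = (a : L) ⊓ f t := by
          simp [hf, Finset.inf_insert, inf_assoc]
        rw [he]
        exact hWs _ (hsub a.2) _ ih
  have htends : Tendsto f atTop (𝓝 (sInf S')) := by
    refine aux_tendsto_of_bounds (S := S') ?_ ?_ ?_
    · exact Eventually.of_forall fun t =>
        le_inf (Finset.le_inf fun a _ => sInf_le a.2) (sInf_le hs₀)
    · intro s hs
      refine Filter.eventually_atTop.2 ⟨{⟨s, hs⟩}, fun t ht => ?_⟩
      exact le_trans inf_le_left (Finset.inf_le (ht (Finset.mem_singleton_self _)))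
    · intro z hbz hub
      exact le_antisymm (le_sInf fun s hs => hub s hs) hbz
  exact hWc.mem_of_tendsto htends (Eventually.of_forall hfW)

/-- From a basis of sub-semilattice neighborhoods and regularity one gets closed
sub-semilattice neighborhoods inside any given neighborhood. -/
theorem aux_exists_closed_semilattice_nhd [T2Space L]
    (hinf : Continuous fun p : L × L => p.1 ⊓ p.2)
    (hinfBasis : ∀ x : L, (nhds x).HasBasis
      (fun s : Set L => s ∈ nhds x ∧ ∀ a ∈ s, ∀ b ∈ s, a ⊓ b ∈ s) id)
    (x : L) {V : Set L} (hV : V ∈ 𝓝 x) :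
    ∃ W ∈ 𝓝 x, W ⊆ V ∧ IsClosed W ∧ ∀ a ∈ W, ∀ b ∈ W, a ⊓ b ∈ W := by
  obtain ⟨K, ⟨hK𝓝, hKc⟩, hKV⟩ := (closed_nhds_basis x).mem_iff.1 hV
  obtain ⟨S, ⟨hS𝓝, hSsemi⟩, hSK⟩ := (hinfBasis x).mem_iff.1 hK𝓝
  refine ⟨closure S, Filter.mem_of_superset hS𝓝 subset_closure,
    (hKc.closure_subset_iff.2 hSK).trans hKV, isClosed_closure, ?_⟩
  intro a ha b hb
  have h1 : (a, b) ∈ closure (S ×ˢ S) := by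
    rw [closure_prod_eq]; exact ⟨ha, hb⟩
  have h2 := image_closure_subset_closure_image hinf (Set.mem_image_of_mem _ h1)
  have h3 : (fun p : L × L => p.1 ⊓ p.2) '' (S ×ˢ S) ⊆ S := by
    rintro _ ⟨⟨u, v⟩, ⟨hu, hv⟩, rfl⟩
    exact hSsemi u hu v hv
  exact closure_mono h3 h2

end Aux

/-- A hypercontinuous lattice equipped with its Lawson topology (a complete lattice with
a compact Hausdorff topology for which binary inf and binary sup are jointly continuous
and every point admits neighborhood bases of sub-semilattices for each operation) is
past contractible if its underlying space is homotopy equivalent to a connected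
CW complex: there is a homotopy from the identity to the constant map at `⊥` which is
monotone for the product of the lattice order and the *reverse* order on `[0,1]`. -/
theorem stmt_13 {L : Type u} [CompleteLattice L] [TopologicalSpace L]
    [CompactSpace L] [T2Space L]
    (hinf : Continuous fun p : L × L => p.1 ⊓ p.2)
    (hsup : Continuous fun p : L × L => p.1 ⊔ p.2)
    (hinfBasis : ∀ x : L, (nhds x).HasBasis
      (fun s : Set L => s ∈ nhds x ∧ ∀ a ∈ s, ∀ b ∈ s, a ⊓ b ∈ s) id)
    (hsupBasis : ∀ x : L, (nhds x).HasBasis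
      (fun s : Set L => s ∈ nhds x ∧ ∀ a ∈ s, ∀ b ∈ s, a ⊔ b ∈ s) id)
    (hcw : ∃ C : TopCat.{u}, Nonempty (TopCat.CWComplex C) ∧ ConnectedSpace C ∧
      Nonempty (ContinuousMap.HomotopyEquiv L C)) :
    ∃ H : L × I → L, Continuous H ∧
      (∀ (x x' : L) (t t' : I), x ≤ x' → t' ≤ t → H (x, t) ≤ H (x', t')) ∧
      (∀ x : L, H (x, 0) = x) ∧ (∀ x : L, H (x, 1) = ⊥) := by
  classical
  haveI : OrderClosedTopology L := by
    constructor
    have h : {p : L × L | p.1 ≤ p.2}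
        = (fun p : L × L => (p.1 ⊓ p.2, p.1)) ⁻¹' (Set.diagonal L) := by
      ext p
      simp only [Set.mem_setOf_eq, Set.mem_preimage, Set.mem_diagonal_iff]
      exact ⟨fun h => inf_eq_left.2 h, fun h => inf_eq_left.1 h⟩
    rw [h]
    exact isClosed_diagonal.preimage (hinf.prodMk continuous_fst)
  -- Step 1: `L` is path-connected (its CW model is connected and locally path-connected),
  -- so there is a path from `⊤` to `⊥`.
  obtain ⟨C, ⟨KC⟩, hconn, ⟨e⟩⟩ := hcw
  haveI := aux_lpc_cw KC
  haveI : PathConnectedSpace C := pathConnectedSpace_iff_connectedSpace.2 hconn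
  obtain ⟨K⟩ := e.left_inv
  have hj : Joined (⊤ : L) (⊥ : L) := by
    have h1 : Joined ((e.invFun.comp e.toFun) (⊤ : L)) ((ContinuousMap.id L) (⊤ : L)) :=
      ⟨K.evalAt ⊤⟩
    have h2 : Joined ((e.invFun.comp e.toFun) (⊥ : L)) ((ContinuousMap.id L) (⊥ : L)) :=
      ⟨K.evalAt ⊥⟩
    have h3 : Joined (e.toFun (⊤ : L)) (e.toFun (⊥ : L)) := PathConnectedSpace.joined _ _
    have h4 : Joined ((e.invFun.comp e.toFun) (⊤ : L)) ((e.invFun.comp e.toFun) (⊥ : L)) :=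
      ⟨h3.somePath.map e.invFun.continuous⟩
    exact (h1.symm.trans h4).trans h2
  set q : Path (⊤ : L) (⊥ : L) := hj.somePath with hqdef
  -- Step 2: take running infima along the path.
  set p : I → L := fun t => sInf (q '' Set.Iic t) with hpdef
  have hpanti : Antitone p := fun t t' h =>
    sInf_le_sInf (Set.image_mono (Set.Iic_subset_Iic.2 h))
  have hIic0 : Set.Iic (0 : I) = {0} := by
    ext s
    simp only [Set.mem_Iic, Set.mem_singleton_iff]
    exact ⟨fun h => le_antisymm h unitInterval.nonneg', fun h => h.le⟩
  have hp0 : p 0 = ⊤ := by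
    simp only [hpdef, hIic0, Set.image_singleton, sInf_singleton]
    exact q.source
  have hp1 : p 1 = ⊥ := by
    refine le_bot_iff.1 ?_
    have h := sInf_le (Set.mem_image_of_mem q (Set.mem_Iic.2 (le_refl (1 : I))))
    rw [q.target] at h
    exact h
  have hple : ∀ t : I, p t ≤ q t := fun t =>
    sInf_le (Set.mem_image_of_mem _ (Set.mem_Iic.2 (le_refl t)))
  -- Step 3: `p` is continuous.
  have hpcont : Continuous p := by
    rw [continuous_iff_continuousAt]
    intro t₀
    have hleft : Filter.Tendsto p (nhdsWithin t₀ (Set.Iic t₀)) (nhds (p t₀)) := by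
      by_cases ht0 : t₀ = 0
      · subst ht0
        rw [hIic0, nhdsWithin_singleton]
        exact tendsto_pure_nhds p 0
      · have h0lt : (0 : I) < t₀ := lt_of_le_of_ne unitInterval.nonneg' (Ne.symm ht0)
        haveI : (nhdsWithin t₀ (Set.Iic t₀)).NeBot :=
          nhdsWithin_neBot_of_mem (Set.mem_Iic.2 le_rfl)
        refine aux_tendsto_of_bounds (S := q '' Set.Iio t₀) ?_ ?_ ?_
        · exact Filter.eventually_of_mem self_mem_nhdsWithin fun t ht => hpanti ht
        · rintro s ⟨u, hu, rfl⟩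
          have hmem : Set.Ioc u t₀ ∈ nhdsWithin t₀ (Set.Iic t₀) :=
            Ioc_mem_nhdsLE hu
          exact Filter.eventually_of_mem hmem fun t ht =>
            sInf_le ⟨u, Set.mem_Iic.2 ht.1.le, rfl⟩
        · intro z hbz hub
          have hc : ∀ y ∈ q '' Set.Iic t₀, z ≤ y := by
            rintro y ⟨u, hu, rfl⟩
            rcases lt_or_eq_of_le (Set.mem_Iic.1 hu) with h | h
            · exact hub _ ⟨u, h, rfl⟩
            · subst h
              haveI : (nhdsWithin u (Set.Iio u)).NeBot :=
                nhdsWithin_Iio_self_neBot' ⟨0, h0lt⟩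
              have hcl : q u ∈ closure (q '' Set.Iio u) := by
                refine mem_closure_of_tendsto
                  ((q.continuous.continuousAt).mono_left (nhdsWithin_le_nhds (s := Set.Iio u))) ?_
                exact Filter.eventually_of_mem self_mem_nhdsWithin fun v hv => ⟨v, hv, rfl⟩
              have hsubcl : closure (q '' Set.Iio u) ⊆ {y | z ≤ y} :=
                closure_minimal (fun y hy => hub y hy)
                  (isClosed_le continuous_const continuous_id)
              exact hsubcl hcl
          exact le_antisymm (le_sInf hc) hbz
    have hright : Filter.Tendsto p (nhdsWithin t₀ (Set.Ici t₀)) (nhds (p t₀)) := by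
      by_cases ht1 : t₀ = 1
      · subst ht1
        have hIci1 : Set.Ici (1 : I) = {1} := by
          ext s
          simp only [Set.mem_Ici, Set.mem_singleton_iff]
          exact ⟨fun h => le_antisymm unitInterval.le_one' h, fun h => h.ge⟩
        rw [hIci1, nhdsWithin_singleton]
        exact tendsto_pure_nhds p 1
      · have h1lt : t₀ < 1 := lt_of_le_of_ne unitInterval.le_one' ht1
        have hr : Filter.Tendsto (fun t => sInf (q '' Set.Icc t₀ t))
            (nhdsWithin t₀ (Set.Ici t₀)) (nhds (q t₀)) := by
          intro V hV
          rw [Filter.mem_map]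
          obtain ⟨W, hW𝓝, hWV, hWc, hWs⟩ :=
            aux_exists_closed_semilattice_nhd hinf hinfBasis (q t₀) hV
          have hpre : q ⁻¹' W ∈ nhdsWithin t₀ (Set.Ici t₀) :=
            nhdsWithin_le_nhds (q.continuous.continuousAt hW𝓝)
          obtain ⟨u, hu, hsub⟩ := (mem_nhdsGE_iff_exists_Ico_subset' h1lt).1 hpre
          refine Filter.mem_of_superset (Ico_mem_nhdsGE hu) ?_
          intro t ht
          have himg : q '' Set.Icc t₀ t ⊆ W := by
            rintro y ⟨s, hs, rfl⟩
            exact hsub ⟨hs.1, lt_of_le_of_lt hs.2 ht.2⟩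
          have hne : (q '' Set.Icc t₀ t).Nonempty :=
            ⟨q t₀, t₀, ⟨le_refl _, ht.1⟩, rfl⟩
          exact hWV (aux_sInf_mem_of_closed_semilattice hWc hWs hne himg)
        have h2 : Filter.Tendsto (fun t => p t₀ ⊓ sInf (q '' Set.Icc t₀ t))
            (nhdsWithin t₀ (Set.Ici t₀)) (nhds (p t₀)) := by
          have hcomp := (hinf.tendsto (p t₀, q t₀)).comp
            (tendsto_const_nhds.prodMk_nhds hr)
          have hthis : Filter.Tendsto (fun t => p t₀ ⊓ sInf (q '' Set.Icc t₀ t))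
              (nhdsWithin t₀ (Set.Ici t₀)) (nhds (p t₀ ⊓ q t₀)) := hcomp
          rwa [inf_eq_left.2 (hple t₀)] at hthis
        refine Filter.Tendsto.congr' ?_ h2
        refine Filter.eventually_of_mem self_mem_nhdsWithin fun t ht => ?_
        have hset : Set.Iic t = Set.Iic t₀ ∪ Set.Icc t₀ t := by
          ext s
          simp only [Set.mem_Iic, Set.mem_union, Set.mem_Icc]
          constructor
          · intro hs
            rcases le_total s t₀ with h | h
            · exact Or.inl h
            · exact Or.inr ⟨h, hs⟩
          · rintro (h | ⟨h1', h2'⟩)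
            · exact h.trans ht
            · exact h2'
        show p t₀ ⊓ sInf (q '' Set.Icc t₀ t) = p t
        simp only [hpdef]
        rw [hset, Set.image_union, sInf_union]
    have hsplit := nhdsLE_sup_nhdsGE t₀
    show Filter.Tendsto p (nhds t₀) (nhds (p t₀))
    rw [← hsplit]
    exact Filter.tendsto_sup.2 ⟨hleft, hright⟩
  -- Step 4: assemble the homotopy.
  refine ⟨fun xt => xt.1 ⊓ p xt.2, ?_, ?_, ?_, ?_⟩
  · exact hinf.comp (continuous_fst.prodMk (hpcont.comp continuous_snd))
  · intro x x' t t' hx ht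
    exact inf_le_inf hx (hpanti ht)
  · intro x
    show x ⊓ p 0 = x
    rw [hp0, inf_top_eq]
  · intro x
    show x ⊓ p 1 = ⊥
    rw [hp1, inf_bot_eq]
end
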